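/- For a Tychonoff space X, if the space C_p(X) of continuous real-valued functions with the topology of pointwise convergence does not have the property (B), then X has the property (κ): every pairwise disjoint sequence of finite subsets of X has an infinite subsequence admitting a point-finite open expansion. -/

import Mathlib

/-- If `C_p(X)` does not have property (B), then `X` has property (κ): every pairwise
disjoint sequence of finite subsets of `X` has an infinite subsequence admitting a
point-finite open expansion. -/
theorem not_B_of_Cp_implies_kappa {X : Type*} [TopologicalSpace X] [T35Space X]
    (hB : ¬ ∃ A : ℕ → Set {f : X → ℝ // Continuous f},
      (∀ n, IsClosed (A n) ∧ IsNowhereDense (A n)) ∧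
      ∀ K : Set {f : X → ℝ // Continuous f}, IsCompact K → ∃ n, K ⊆ A n) :
    ∀ S : ℕ → Set X, (∀ n, (S n).Finite) → Pairwise (Function.onFun Disjoint S) →
      ∃ φ : ℕ → ℕ, StrictMono φ ∧ ∃ W : ℕ → Set X,
        (∀ k, IsOpen (W k) ∧ S (φ k) ⊆ W k) ∧ ∀ x : X, {k | x ∈ W k}.Finite := by
  intro S hSfin hSdisj
  by_cases hemp : {m | S m = ∅}.Infinite
  · -- trivial case: infinitely many empty sets
    refine ⟨Nat.nth (fun m => S m = ∅), Nat.nth_strictMono hemp, fun _ => ∅,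
      fun k => ⟨isOpen_empty, by simp [Nat.nth_mem_of_infinite hemp k]⟩, fun x => by simp⟩
  · -- main case
    rw [Set.not_infinite] at hemp
    -- the candidate absorbing family
    set A : ℕ → Set {f : X → ℝ // Continuous f} :=
      fun n => {f | ∀ m, n ≤ m → ∃ x ∈ S m, |f.1 x| ≤ (n : ℝ)} with hA
    have hclosed : ∀ n, IsClosed (A n) := by
      intro n
      have : A n = ⋂ m, ⋂ (_ : n ≤ m), ⋃ x ∈ S m,
          {f : {f : X → ℝ // Continuous f} | |f.1 x| ≤ (n : ℝ)} := by
        ext f; simp [hA]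
      rw [this]
      refine isClosed_iInter fun m => isClosed_iInter fun _ =>
        (hSfin m).isClosed_biUnion fun x _ => ?_
      exact isClosed_le ((continuous_apply x).comp continuous_subtype_val).abs
        continuous_const
    -- each point in `S m` lies in `S m` only (disjointness)
    have hmem_unique : ∀ x : X, {m | x ∈ S m}.Subsingleton := by
      intro x a ha b hb
      by_contra hne
      exact Set.disjoint_left.mp (hSdisj hne) ha hb
    -- nowhere density
    have hnwd : ∀ n, IsNowhereDense (A n) := by
      intro n
      rw [(hclosed n).isNowhereDense_iff]
      rw [Set.eq_empty_iff_forall_notMem]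
      intro f₀ hf₀
      have hAn : A n ∈ nhds f₀ := mem_interior_iff_mem_nhds.mp hf₀
      rw [nhds_subtype_eq_comap, Filter.mem_comap] at hAn
      obtain ⟨T, hT, hTsub⟩ := hAn
      rw [nhds_pi, Filter.mem_pi] at hT
      obtain ⟨I, Ifin, t, ht, hIt⟩ := hT
      -- choose m ≥ n with S m nonempty and disjoint from I
      have hbadfin : ({m | S m = ∅} ∪ {m | (S m ∩ I).Nonempty}).Finite := by
        refine hemp.union (Set.Finite.subset (Ifin.biUnion
          (fun x _ => ((hmem_unique x).finite))) ?_)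
        rintro m ⟨x, hxS, hxI⟩
        exact Set.mem_biUnion hxI hxS
      obtain ⟨b, hb⟩ := hbadfin.bddAbove
      set m := max n (b + 1) with hm
      have hmn : n ≤ m := le_max_left _ _
      have hmbad : m ∉ ({m | S m = ∅} ∪ {m | (S m ∩ I).Nonempty}) := by
        intro hmem
        have := hb hmem
        have : b + 1 ≤ b := le_trans (le_max_right n (b + 1)) this
        omega
      have hSm : S m ≠ ∅ := fun h => hmbad (Or.inl h)
      have hSmI : ∀ x ∈ S m, x ∉ I := by
        intro x hx hxI
        exact hmbad (Or.inr ⟨x, hx, hxI⟩)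
      have Iclosed : IsClosed I := Ifin.isClosed
      -- bump functions
      have hg : ∀ x : X, ∃ g : X → ℝ, Continuous g ∧ (x ∈ S m → g x = 1) ∧
          (∀ y ∈ I, g y = 0) ∧ ∀ y, 0 ≤ g y := by
        intro x
        by_cases hx : x ∈ S m
        · obtain ⟨u, hu, hux, huI⟩ :=
            CompletelyRegularSpace.completely_regular x I Iclosed (hSmI x hx)
          refine ⟨fun y => 1 - (u y : ℝ), ?_, ?_, ?_, ?_⟩
          · exact continuous_const.sub (continuous_subtype_val.comp hu)
          · intro _
            show (1:ℝ) - (u x : ℝ) = 1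
            rw [hux]
            simp
          · intro y hy
            show (1:ℝ) - (u y : ℝ) = 0
            have h1 : u y = 1 := huI hy
            rw [h1]
            simp
          · intro y
            show (0:ℝ) ≤ 1 - (u y : ℝ)
            have := (u y).2.2
            linarith
        · exact ⟨fun _ => 0, continuous_const, fun h => absurd h hx,
            fun _ _ => rfl, fun _ => le_refl 0⟩
      choose g hgc hg1 hgI hg0 using hg
      set Fm := (hSfin m).toFinset with hFm
      have hFm_mem : ∀ x, x ∈ Fm ↔ x ∈ S m := fun x => (hSfin m).mem_toFinset
      set h : X → ℝ := fun y => ∑ x ∈ Fm, g x y with hh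
      have hhc : Continuous h := continuous_finset_sum _ fun x _ => hgc x
      have hhI : ∀ y ∈ I, h y = 0 := by
        intro y hy
        show ∑ x ∈ Fm, g x y = 0
        exact Finset.sum_eq_zero fun x _ => hgI x y hy
      have hh1 : ∀ x ∈ S m, 1 ≤ h x := by
        intro x hx
        have : g x x ≤ h x :=
          Finset.single_le_sum (f := fun z => g z x) (fun y _ => hg0 y x) ((hFm_mem x).mpr hx)
        rw [hg1 x hx] at this
        exact this
      set c : ℝ := (n : ℝ) + 1 + ∑ x ∈ Fm, |f₀.1 x| with hc
      have hc0 : 0 ≤ c := by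
        have : (0:ℝ) ≤ ∑ x ∈ Fm, |f₀.1 x| := Finset.sum_nonneg fun x _ => abs_nonneg _
        positivity
      have hcx : ∀ x ∈ S m, (n : ℝ) + 1 + |f₀.1 x| ≤ c := by
        intro x hx
        have : |f₀.1 x| ≤ ∑ x ∈ Fm, |f₀.1 x| :=
          Finset.single_le_sum (f := fun z => |f₀.1 z|) (fun y _ => abs_nonneg _)
            ((hFm_mem x).mpr hx)
        rw [hc]; linarith
      set G : {f : X → ℝ // Continuous f} :=
        ⟨fun y => f₀.1 y + c * h y, f₀.2.add (continuous_const.mul hhc)⟩ with hG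
      have hGT : G ∈ A n := by
        apply hTsub
        show G.1 ∈ T
        apply hIt
        intro i hi
        have : G.1 i = f₀.1 i := by
          show f₀.1 i + c * h i = f₀.1 i
          rw [hhI i hi]; ring
        rw [this]
        exact mem_of_mem_nhds (ht i)
      obtain ⟨x, hxS, hxle⟩ := hGT m hmn
      have h1 : 1 ≤ h x := hh1 x hxS
      have h2 : (n : ℝ) + 1 + |f₀.1 x| ≤ c := hcx x hxS
      have h3 : c * 1 ≤ c * h x := mul_le_mul_of_nonneg_left h1 hc0
      have h4 : (n : ℝ) + 1 ≤ G.1 x := by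
        show (n : ℝ) + 1 ≤ f₀.1 x + c * h x
        have : -(|f₀.1 x|) ≤ f₀.1 x := neg_abs_le _
        nlinarith
      have : G.1 x ≤ |G.1 x| := le_abs_self _
      have : (n : ℝ) + 1 ≤ (n : ℝ) := le_trans h4 (le_trans this hxle)
      linarith
    -- property (B) fails for this family: get a compact set not absorbed
    have hK : ∃ K : Set {f : X → ℝ // Continuous f}, IsCompact K ∧ ∀ n, ¬ K ⊆ A n := by
      by_contra hcon
      push_neg at hcon
      exact hB ⟨A, fun n => ⟨hclosed n, hnwd n⟩, hcon⟩
    obtain ⟨K, hKc, hKn⟩ := hK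
    have hsel : ∀ n : ℕ, ∃ p : {f : X → ℝ // Continuous f} × ℕ,
        p.1 ∈ K ∧ n ≤ p.2 ∧ ∀ x ∈ S p.2, (n : ℝ) < |p.1.1 x| := by
      intro n
      obtain ⟨f, hfK, hfA⟩ := Set.not_subset.mp (hKn n)
      rw [hA] at hfA
      simp only [Set.mem_setOf_eq] at hfA
      push_neg at hfA
      obtain ⟨mm, hmm, hbig⟩ := hfA
      exact ⟨⟨f, mm⟩, hfK, hmm, hbig⟩
    choose p hp1 hp2 hp3 using hsel
    set ψ : ℕ → ℕ := fun k => Nat.rec 0 (fun _ ih => (p ih).2 + 1) k with hψ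
    have hψsucc : ∀ k, ψ (k + 1) = (p (ψ k)).2 + 1 := fun k => rfl
    have hψmono : StrictMono ψ := by
      apply strictMono_nat_of_lt_succ
      intro k
      rw [hψsucc]
      exact Nat.lt_succ_of_le (hp2 (ψ k))
    refine ⟨fun k => (p (ψ k)).2, ?_, fun k => {x | ((ψ k : ℕ) : ℝ) < |(p (ψ k)).1.1 x|},
      fun k => ⟨?_, ?_⟩, fun x => ?_⟩
    · apply strictMono_nat_of_lt_succ
      intro k
      calc (p (ψ k)).2 < (p (ψ k)).2 + 1 := Nat.lt_succ_self _
        _ = ψ (k + 1) := (hψsucc k).symm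
        _ ≤ (p (ψ (k + 1))).2 := hp2 _
    · exact isOpen_lt continuous_const (p (ψ k)).1.2.abs
    · exact fun x hx => hp3 (ψ k) x hx
    · -- point-finiteness
      have hcomp : IsCompact ((fun f : {f : X → ℝ // Continuous f} => |f.1 x|) '' K) :=
        hKc.image (((continuous_apply x).comp continuous_subtype_val).abs)
      obtain ⟨C, hC⟩ := hcomp.bddAbove
      have hbound : ∀ f ∈ K, |f.1 x| ≤ C := fun f hf => hC ⟨f, hf, rfl⟩
      refine Set.Finite.subset (Set.finite_Iio (⌈C⌉₊)) ?_
      intro k hk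
      have h1 : ((ψ k : ℕ) : ℝ) < |(p (ψ k)).1.1 x| := hk
      have h2 : |(p (ψ k)).1.1 x| ≤ C := hbound _ (hp1 _)
      have h3 : ((k : ℕ) : ℝ) ≤ ((ψ k : ℕ) : ℝ) := by
        exact_mod_cast hψmono.le_apply
      have : ((k : ℕ) : ℝ) < C := lt_of_le_of_lt h3 (lt_of_lt_of_le h1 h2)
      exact Nat.lt_ceil.mpr this
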